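/- Weak monotonicity: suppose the achievement matrix x is obtained from y by a simple increment, i.e. there is a single entry (i', j') with x_{i'j'} > y_{i'j'} and all other entries of x and y coincide. Then for all α ≥ 0, FGT_α(x; z) ≤ FGT_α(y; z). -/
import Mathlib


open Finset

/-- Deprivation gap `r_{ij}^α` for an achievement row `y` (convention `0 ^ (0:ℝ) = 1`). -/
noncomputable def gap {d : ℕ} (z y : Fin d → ℝ) (α : ℝ) (j : Fin d) : ℝ :=
  if y j ≤ z j then ((z j - y j) / z j) ^ α else 0

/-- Network-adjusted deprivation `D_{ij}^α`. -/
noncomputable def Dnet {d : ℕ} (M : Fin d → Fin d → ℝ) (z y : Fin d → ℝ) (α : ℝ)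
    (j : Fin d) : ℝ :=
  gap z y α j + (1 / ((d : ℝ) - 1)) * ∑ j' ∈ Finset.univ.erase j, M j j' * gap z y α j'

/-- Sum `Σ_j` of the `j`-th column of `M`. -/
noncomputable def colSum {d : ℕ} (M : Fin d → Fin d → ℝ) (j : Fin d) : ℝ := ∑ j', M j' j

/-- Weighted deprivation count `D_i = Σ_j w_j D_{ij}^0`. -/
noncomputable def Dcount {d : ℕ} (M : Fin d → Fin d → ℝ) (z w y : Fin d → ℝ) : ℝ :=
  ∑ j, w j * Dnet M z y 0 j

/-- Dual-cutoff identification function `ρ_k`. -/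
noncomputable def rho {d : ℕ} (M : Fin d → Fin d → ℝ) (z w : Fin d → ℝ) (k : ℝ)
    (y : Fin d → ℝ) : ℝ :=
  if k ≤ Dcount M z w y then 1 else 0

/-- Network-adjusted FGT measure with normalizing constant `dt`. -/
noncomputable def FGT {N d : ℕ} (M : Fin d → Fin d → ℝ) (z w : Fin d → ℝ) (k α dt : ℝ)
    (y : Fin N → Fin d → ℝ) : ℝ :=
  (1 / ((N : ℝ) * dt)) * ∑ i, ∑ j, w j * Dnet M z (y i) α j * rho M z w k (y i)


lemma gap_nonneg {d : ℕ} (z : Fin d → ℝ) (hz : ∀ j, 0 < z j) (α : ℝ)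
    (u : Fin d → ℝ) (j : Fin d) : 0 ≤ gap z u α j := by
  unfold gap
  split_ifs with h
  · exact Real.rpow_nonneg (div_nonneg (sub_nonneg.2 h) (hz j).le) α
  · exact le_rfl

lemma gap_anti {d : ℕ} (z : Fin d → ℝ) (hz : ∀ j, 0 < z j) (α : ℝ) (hα : 0 ≤ α)
    (u v : Fin d → ℝ) (h : ∀ j, v j ≤ u j) (j : Fin d) :
    gap z u α j ≤ gap z v α j := by
  unfold gap
  split_ifs with h1 h2 h2
  · apply Real.rpow_le_rpow (div_nonneg (sub_nonneg.2 h1) (hz j).le) _ hα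
    gcongr
    · exact (hz j).le
    · exact h j
  · exact absurd ((h j).trans h1) h2
  · exact Real.rpow_nonneg (div_nonneg (sub_nonneg.2 h2) (hz j).le) α
  · exact le_rfl

lemma Dnet_nonneg {d : ℕ} (M : Fin d → Fin d → ℝ) (hM0 : ∀ j j', 0 ≤ M j j')
    (z : Fin d → ℝ) (hz : ∀ j, 0 < z j) (u : Fin d → ℝ) (α : ℝ) (hd : 2 ≤ d)
    (j : Fin d) : 0 ≤ Dnet M z u α j := by
  unfold Dnet
  have h1 : (0:ℝ) ≤ 1 / ((d : ℝ) - 1) := by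
    apply div_nonneg zero_le_one
    have : (2:ℝ) ≤ (d:ℝ) := by exact_mod_cast hd
    linarith
  have h2 : (0:ℝ) ≤ ∑ j' ∈ Finset.univ.erase j, M j j' * gap z u α j' :=
    Finset.sum_nonneg fun j' _ => mul_nonneg (hM0 j j') (gap_nonneg z hz α u j')
  have := gap_nonneg z hz α u j
  positivity

lemma Dnet_anti {d : ℕ} (M : Fin d → Fin d → ℝ) (hM0 : ∀ j j', 0 ≤ M j j')
    (z : Fin d → ℝ) (hz : ∀ j, 0 < z j) (α : ℝ) (hα : 0 ≤ α) (hd : 2 ≤ d)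
    (u v : Fin d → ℝ) (h : ∀ j, v j ≤ u j) (j : Fin d) :
    Dnet M z u α j ≤ Dnet M z v α j := by
  unfold Dnet
  have h1 : (0:ℝ) ≤ 1 / ((d : ℝ) - 1) := by
    apply div_nonneg zero_le_one
    have : (2:ℝ) ≤ (d:ℝ) := by exact_mod_cast hd
    linarith
  apply add_le_add (gap_anti z hz α hα u v h j)
  apply mul_le_mul_of_nonneg_left _ h1
  apply Finset.sum_le_sum
  intro j' _
  exact mul_le_mul_of_nonneg_left (gap_anti z hz α hα u v h j') (hM0 j j')

lemma Dcount_anti {d : ℕ} (M : Fin d → Fin d → ℝ) (hM0 : ∀ j j', 0 ≤ M j j')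
    (z : Fin d → ℝ) (hz : ∀ j, 0 < z j) (hd : 2 ≤ d)
    (w : Fin d → ℝ) (hw : ∀ j, 0 < w j)
    (u v : Fin d → ℝ) (h : ∀ j, v j ≤ u j) :
    Dcount M z w u ≤ Dcount M z w v := by
  unfold Dcount
  apply Finset.sum_le_sum
  intro j _
  exact mul_le_mul_of_nonneg_left (Dnet_anti M hM0 z hz 0 le_rfl hd u v h j) (hw j).le

/-- weak monotonicity — a simple increment never increases FGT. -/
theorem FGT_weak_monotonicity
    (d : ℕ) (hd : 2 ≤ d) (z : Fin d → ℝ) (hz : ∀ j, 0 < z j)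
    (M : Fin d → Fin d → ℝ) (hM0 : ∀ j j', 0 ≤ M j j') (hM1 : ∀ j j', M j j' ≤ 1)
    (hMdiag : ∀ j, M j j = 1)
    (w : Fin d → ℝ) (hw : ∀ j, 0 < w j) (hwsum : (∑ j, w j) = (d : ℝ))
    (dt : ℝ) (hdt : dt = (d : ℝ) + ((∑ j, w j * colSum M j) - (d : ℝ)) / ((d : ℝ) - 1))
    (k : ℝ) (hk0 : 0 < k) (hk1 : k ≤ dt) (α : ℝ) (hα : 0 ≤ α)
    (N : ℕ) (hN : 1 ≤ N)
    (x y : Fin N → Fin d → ℝ) (hx : ∀ i j, 0 ≤ x i j) (hy : ∀ i j, 0 ≤ y i j)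
    (i' : Fin N) (j' : Fin d) (hgt : y i' j' < x i' j')
    (hother : ∀ i j, ¬(i = i' ∧ j = j') → x i j = y i j) :
    FGT M z w k α dt x ≤ FGT M z w k α dt y := by
  have hd2 : (2:ℝ) ≤ (d:ℝ) := by exact_mod_cast hd
  have hdtpos : 0 < dt := lt_of_lt_of_le hk0 hk1
  have hNpos : (0:ℝ) < (N:ℝ) := by exact_mod_cast hN
  unfold FGT
  apply mul_le_mul_of_nonneg_left _ (by positivity)
  apply Finset.sum_le_sum
  intro i _
  by_cases hi : i = i'
  · subst hi
    have hle : ∀ j, y i j ≤ x i j := by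
      intro j
      by_cases hj : j = j'
      · subst hj; exact hgt.le
      · rw [hother i j (fun hc => hj hc.2)]
    have hrho : rho M z w k (x i) ≤ rho M z w k (y i) := by
      unfold rho
      have hD := Dcount_anti M hM0 z hz hd w hw (x i) (y i) hle
      split_ifs with h1 h2 h2
      · exact le_rfl
      · exact absurd (h1.trans hD) h2
      · exact zero_le_one
      · exact le_rfl
    have hrhox : 0 ≤ rho M z w k (x i) := by
      unfold rho; split_ifs <;> norm_num
    apply Finset.sum_le_sum
    intro j _
    have hDy : 0 ≤ Dnet M z (y i) α j := Dnet_nonneg M hM0 z hz (y i) α hd j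
    have hDle := Dnet_anti M hM0 z hz α hα hd (x i) (y i) hle j
    calc w j * Dnet M z (x i) α j * rho M z w k (x i)
        ≤ w j * Dnet M z (y i) α j * rho M z w k (x i) := by
          apply mul_le_mul_of_nonneg_right _ hrhox
          exact mul_le_mul_of_nonneg_left hDle (hw j).le
      _ ≤ w j * Dnet M z (y i) α j * rho M z w k (y i) := by
          apply mul_le_mul_of_nonneg_left hrho
          exact mul_nonneg (hw j).le hDy
  · have : x i = y i := funext fun j => hother i j (fun hc => hi hc.1)
    rw [this]
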